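/- arXiv:1807.05690 — 2 statements merged into one kernel-verified Lean document; each statement's English description precedes it below -/
import Mathlib

section
/- Let U : ℝ → M₃(ℂ) be measurable with ∫_ℝ ‖U(y)‖ dy < ∞. For each λ ∈ ℂ with Im λ ≥ 0 there exists a unique bounded continuous n(·,λ) : ℝ → ℂ³ satisfying n(x,λ) = e₁ + ∫_{−∞}^x D_λ(x−y) (U(y) n(y,λ)) dy, where e₁ = (1,0,0)ᵀ and D_λ(t) = diag(1, e^{2iλt}, e^{2iλt}); it satisfies sup_x |n(x,λ)| ≤ exp(∫_ℝ ‖U(y)‖ dy). Moreover, for each fixed x ∈ ℝ, the map λ ↦ n(x,λ) is continuous on the closed upper half-plane {Im λ ≥ 0} and holomorphic on the open upper half-plane {Im λ > 0}. -/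
noncomputable section
open MeasureTheory Complex Matrix Filter
open scoped Real Topology

abbrev Mat3 := Matrix (Fin 3) (Fin 3) ℂ

/-- Operator norm of a 3×3 complex matrix. -/
def opNorm (A : Mat3) : ℝ := ‖Matrix.toEuclideanCLM (𝕜 := ℂ) A‖

/-- Euclidean norm of a vector in ℂ³. -/
def vecNorm (w : Fin 3 → ℂ) : ℝ := Real.sqrt (∑ i, ‖w i‖ ^ 2)

/-- `e₁ = (1,0,0)ᵀ`. -/
def e1 : Fin 3 → ℂ := fun i => if i = 0 then 1 else 0

/-- The diagonal factor `D_λ(t) = diag(1, e^{2iλt}, e^{2iλt})` acting on the `i`-th entry. -/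
def dFac (lam : ℂ) (t : ℝ) (i : Fin 3) : ℂ :=
  if i = 0 then 1 else Complex.exp (2 * Complex.I * lam * t)

/-- `n` is a bounded continuous solution of
`n(x,λ) = e₁ + ∫_{-∞}^x D_λ(x-y) (U(y) n(y,λ)) dy`. -/
def IsJostCol (U : ℝ → Mat3) (lam : ℂ) (n : ℝ → Fin 3 → ℂ) : Prop :=
  (∀ i, Continuous fun x => n x i) ∧
  (∃ C : ℝ, ∀ x, vecNorm (n x) ≤ C) ∧
  (∀ (x : ℝ) (i : Fin 3),
    n x i = e1 i + ∫ y in Set.Iic x, dFac lam (x - y) i * (U y).mulVec (n y) i)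

namespace JostAux

abbrev V : Type := EuclideanSpace ℂ (Fin 3)

def e1v : V := EuclideanSpace.single 0 1

def T0 : V →L[ℂ] V :=
  (EuclideanSpace.proj (𝕜 := ℂ) (0 : Fin 3)).smulRight (EuclideanSpace.single 0 1)

def T1 : V →L[ℂ] V :=
  (EuclideanSpace.proj (𝕜 := ℂ) (1 : Fin 3)).smulRight (EuclideanSpace.single 1 1)
    + (EuclideanSpace.proj (𝕜 := ℂ) (2 : Fin 3)).smulRight (EuclideanSpace.single 2 1)

lemma T0_apply (v : V) (i : Fin 3) : T0 v i = if i = 0 then v i else 0 := by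
  fin_cases i <;>
    simp [T0, ContinuousLinearMap.smulRight_apply, EuclideanSpace.single_apply,
      PiLp.proj_apply]

lemma T1_apply (v : V) (i : Fin 3) : T1 v i = if i = 0 then 0 else v i := by
  fin_cases i <;>
    simp [T1, ContinuousLinearMap.smulRight_apply, EuclideanSpace.single_apply,
      PiLp.proj_apply, ContinuousLinearMap.add_apply]

/-- `D_λ(t)` as an operation on `V`. -/
def appD (lam : ℂ) (t : ℝ) (v : V) : V := T0 v + Complex.exp (2 * I * lam * t) • T1 v

lemma appD_apply (lam : ℂ) (t : ℝ) (v : V) (i : Fin 3) :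
    appD lam t v i = dFac lam t i * v i := by
  have h1 : (appD lam t v) i = T0 v i + Complex.exp (2 * I * lam * t) * T1 v i := rfl
  rw [h1, T0_apply, T1_apply, dFac]
  by_cases h : i = 0 <;> simp [h]

lemma norm_exp_fac {lam : ℂ} (hlam : 0 ≤ lam.im) {t : ℝ} (ht : 0 ≤ t) :
    ‖Complex.exp (2 * I * lam * t)‖ ≤ 1 := by
  rw [Complex.norm_exp]
  have hre : (2 * I * lam * t).re = -(2 * t * lam.im) := by
    simp [Complex.mul_re, Complex.mul_im]
    ring
  rw [hre]
  have h1 : 0 ≤ 2 * t * lam.im := by positivity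
  calc Real.exp (-(2 * t * lam.im)) ≤ Real.exp 0 := Real.exp_le_exp.2 (by linarith)
    _ = 1 := Real.exp_zero

lemma dFac_norm_le {lam : ℂ} (hlam : 0 ≤ lam.im) {t : ℝ} (ht : 0 ≤ t) (i : Fin 3) :
    ‖dFac lam t i‖ ≤ 1 := by
  rw [dFac]
  by_cases h : i = 0
  · simp [h]
  · rw [if_neg h]
    exact norm_exp_fac hlam ht

lemma norm_V_eq (v : V) : ‖v‖ = Real.sqrt (∑ i, ‖v i‖ ^ 2) := by
  rw [EuclideanSpace.norm_eq]

lemma vecNorm_eq_norm (w : Fin 3 → ℂ) :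
    vecNorm w = ‖((WithLp.equiv 2 (Fin 3 → ℂ)).symm w : V)‖ := by
  rw [norm_V_eq, vecNorm]
  congr 1

lemma norm_appD_le {lam : ℂ} (hlam : 0 ≤ lam.im) {t : ℝ} (ht : 0 ≤ t) (v : V) :
    ‖appD lam t v‖ ≤ ‖v‖ := by
  rw [norm_V_eq, norm_V_eq]
  apply Real.sqrt_le_sqrt
  refine Finset.sum_le_sum fun i _ => ?_
  have h1 : (appD lam t v) i = dFac lam t i * v i := appD_apply lam t v i
  rw [h1]
  have h2 : ‖dFac lam t i * v i‖ = ‖dFac lam t i‖ * ‖v i‖ := norm_mul _ _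
  have h3 : ‖dFac lam t i * v i‖ ≤ ‖v i‖ := by
    rw [h2]
    calc ‖dFac lam t i‖ * ‖v i‖ ≤ 1 * ‖v i‖ :=
          mul_le_mul_of_nonneg_right (dFac_norm_le hlam ht i) (norm_nonneg _)
      _ = ‖v i‖ := one_mul _
  exact pow_le_pow_left₀ (norm_nonneg _) h3 2

lemma norm_T0_le (v : V) : ‖T0 v‖ ≤ ‖v‖ := by
  rw [norm_V_eq, norm_V_eq]
  apply Real.sqrt_le_sqrt
  refine Finset.sum_le_sum fun i _ => ?_
  rw [T0_apply]
  by_cases h : i = 0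
  · simp [h]
  · simp [h]

lemma norm_T1_le (v : V) : ‖T1 v‖ ≤ ‖v‖ := by
  rw [norm_V_eq, norm_V_eq]
  apply Real.sqrt_le_sqrt
  refine Finset.sum_le_sum fun i _ => ?_
  rw [T1_apply]
  by_cases h : i = 0
  · simp [h]
  · simp [h]

lemma norm_e1v : ‖e1v‖ = 1 := by
  rw [e1v, EuclideanSpace.norm_single]; simp

/-- matrix action as CLM on V -/
def Uc (U : ℝ → Mat3) (y : ℝ) : V →L[ℂ] V := Matrix.toEuclideanCLM (𝕜 := ℂ) (U y)

lemma Uc_apply (U : ℝ → Mat3) (y : ℝ) (v : V) (i : Fin 3) :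
    Uc U y v i = (U y).mulVec (fun j => v j) i := by
  rfl

lemma norm_Uc_le (U : ℝ → Mat3) (y : ℝ) (v : V) : ‖Uc U y v‖ ≤ opNorm (U y) * ‖v‖ :=
  (Matrix.toEuclideanCLM (𝕜 := ℂ) (U y)).le_opNorm v

lemma opNorm_nonneg (A : Mat3) : 0 ≤ opNorm A := norm_nonneg _

end JostAux

namespace JostAux
open Set

section prim
variable {u : ℝ → ℝ}

/-- primitive `F x = ∫_{-∞}^x u`. -/
def primF (u : ℝ → ℝ) (x : ℝ) : ℝ := ∫ y in Iic x, u y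

lemma primF_nonneg (hu0 : ∀ y, 0 ≤ u y) (x : ℝ) : 0 ≤ primF u x :=
  setIntegral_nonneg measurableSet_Iic fun y _ => hu0 y

lemma primF_mono (hu : Integrable u volume) (hu0 : ∀ y, 0 ≤ u y) : Monotone (primF u) :=
  fun a b hab => setIntegral_mono_set hu.integrableOn (Filter.Eventually.of_forall hu0)
    (HasSubset.Subset.eventuallyLE (Iic_subset_Iic.2 hab))

lemma primF_le_integral (hu : Integrable u volume) (hu0 : ∀ y, 0 ≤ u y) (x : ℝ) :
    primF u x ≤ ∫ y, u y :=
  setIntegral_le_integral hu (Filter.Eventually.of_forall hu0)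

lemma primF_add_Ioc (hu : Integrable u volume) {a b : ℝ} (hab : a ≤ b) :
    primF u b = primF u a + ∫ y in Ioc a b, u y := by
  rw [primF, primF, ← setIntegral_union (Iic_disjoint_Ioc le_rfl) measurableSet_Ioc
    hu.integrableOn hu.integrableOn, Iic_union_Ioc_eq_Iic hab]

/-- helper: pointwise limit of moving indicator -/
lemma tendsto_indicator_Iic {E : Type*} [NormedAddCommGroup E] {g : ℝ → ℝ → E} {x₀ y : ℝ}
    (hy : y ≠ x₀) (hg : Tendsto (fun x => g x y) (𝓝 x₀) (𝓝 (g x₀ y))) :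
    Tendsto (fun x => Set.indicator (Iic x) (g x) y) (𝓝 x₀)
      (𝓝 (Set.indicator (Iic x₀) (g x₀) y)) := by
  rcases lt_or_gt_of_ne hy with h | h
  · have hev : ∀ᶠ x in 𝓝 x₀, g x y = Set.indicator (Iic x) (g x) y := by
      filter_upwards [lt_mem_nhds h] with x hx
      exact (Set.indicator_of_mem (show y ∈ Iic x from le_of_lt hx) (g x)).symm
    rw [Set.indicator_of_mem (show y ∈ Iic x₀ from le_of_lt h) (g x₀)]
    exact hg.congr' hev
  · have hev : ∀ᶠ x in 𝓝 x₀, (0 : E) = Set.indicator (Iic x) (g x) y := by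
      filter_upwards [gt_mem_nhds h] with x hx
      exact (Set.indicator_of_notMem (show y ∉ Iic x from not_le.2 hx) (g x)).symm
    rw [Set.indicator_of_notMem (show y ∉ Iic x₀ from not_le.2 h) (g x₀)]
    exact tendsto_const_nhds.congr' hev

lemma ae_ne (x₀ : ℝ) : ∀ᵐ (y : ℝ), y ≠ x₀ := by
  have h : volume ({x₀} : Set ℝ) = 0 := Real.volume_singleton
  exact measure_eq_zero_iff_ae_notMem.mp h

lemma continuous_primF (hu : Integrable u volume) : Continuous (primF u) := by
  rw [continuous_iff_continuousAt]
  intro x₀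
  have key : Tendsto (fun x => ∫ y, Set.indicator (Iic x) u y) (𝓝 x₀)
      (𝓝 (∫ y, Set.indicator (Iic x₀) u y)) := by
    apply tendsto_integral_filter_of_dominated_convergence (bound := fun y => ‖u y‖)
    · exact Filter.Eventually.of_forall fun x =>
        hu.aestronglyMeasurable.indicator measurableSet_Iic
    · exact Filter.Eventually.of_forall fun x =>
        Filter.Eventually.of_forall fun y => norm_indicator_le_norm_self _ _
    · exact hu.norm
    · filter_upwards [ae_ne x₀] with y hy
      exact tendsto_indicator_Iic (g := fun _ y => u y) hy tendsto_const_nhds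
  have hrw : (primF u) = fun x => ∫ y, Set.indicator (Iic x) u y := by
    funext x; rw [primF, integral_indicator measurableSet_Iic]
  rw [ContinuousAt, hrw]
  exact key

lemma tendsto_primF_atBot (hu : Integrable u volume) :
    Tendsto (primF u) atBot (𝓝 0) := by
  have key : Tendsto (fun x => ∫ y, Set.indicator (Iic x) u y) atBot
      (𝓝 (∫ _ : ℝ, (0 : ℝ))) := by
    apply tendsto_integral_filter_of_dominated_convergence (bound := fun y => ‖u y‖)
    · exact Filter.Eventually.of_forall fun x =>
        hu.aestronglyMeasurable.indicator measurableSet_Iic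
    · exact Filter.Eventually.of_forall fun x =>
        Filter.Eventually.of_forall fun y => norm_indicator_le_norm_self _ _
    · exact hu.norm
    · refine Filter.Eventually.of_forall fun y => ?_
      have hev : ∀ᶠ x in atBot, (0 : ℝ) = Set.indicator (Iic x) u y := by
        filter_upwards [eventually_lt_atBot y] with x hx
        exact (Set.indicator_of_notMem (show y ∉ Iic x from not_le.2 hx) u).symm
      exact tendsto_const_nhds.congr' hev
  rw [integral_zero] at key
  have hrw : (primF u) = fun x => ∫ y, Set.indicator (Iic x) u y := by
    funext x; rw [primF, integral_indicator measurableSet_Iic]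
  rw [hrw]
  exact key

lemma integrableOn_mul_primF_pow (hu : Integrable u volume) (hu0 : ∀ y, 0 ≤ u y) (k : ℕ)
    (s : Set ℝ) : IntegrableOn (fun y => u y * primF u y ^ k) s volume := by
  have hbd : ∀ y, ‖primF u y ^ k‖ ≤ (∫ y, u y) ^ k := by
    intro y
    rw [Real.norm_eq_abs, _root_.abs_of_nonneg (pow_nonneg (primF_nonneg hu0 y) k)]
    exact pow_le_pow_left₀ (primF_nonneg hu0 y) (primF_le_integral hu hu0 y) k
  have h := (hu.restrict (s := s)).bdd_mul
    (((continuous_primF hu).pow k).aestronglyMeasurable.restrict)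
    (Filter.Eventually.of_forall hbd)
  simpa [mul_comm, IntegrableOn] using h

lemma sum_range_pow_le (n k : ℕ) :
    (∑ i ∈ Finset.range (n+1), (i:ℝ)^k) ≤ ((n:ℝ)+1)^(k+1)/(k+1) := by
  induction n with
  | zero =>
    rcases Nat.eq_zero_or_pos k with hk | hk
    · subst hk; norm_num
    · rw [Finset.sum_range_one]
      push_cast
      rw [zero_pow (by omega : k ≠ 0)]
      positivity
  | succ n ih =>
    rw [Finset.sum_range_succ]
    set a : ℝ := (n:ℝ) + 1 with ha
    have ha0 : (0:ℝ) ≤ a := by positivity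
    have key : a^(k+1) + ((k:ℝ)+1) * a^k ≤ (a+1)^(k+1) := by
      have hexp := add_pow a 1 (k+1)
      have hsub : ({k, k+1} : Finset ℕ) ⊆ Finset.range (k+2) := by
        intro m hm
        simp only [Finset.mem_insert, Finset.mem_singleton] at hm
        rcases hm with rfl | rfl <;> simp [Finset.mem_range] <;> omega
      have hnn : ∀ m ∈ Finset.range (k+2), m ∉ ({k, k+1} : Finset ℕ) →
          0 ≤ a ^ m * 1 ^ (k+1-m) * ((k+1).choose m : ℝ) := by
        intro m _ _
        positivity
      have hle := Finset.sum_le_sum_of_subset_of_nonneg hsub hnn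
      rw [Finset.sum_pair (by omega : k ≠ k+1)] at hle
      rw [hexp]
      refine le_trans (le_of_eq ?_) hle
      rw [Nat.choose_succ_self_right, Nat.choose_self]
      push_cast
      ring
    have hstep : a^(k+1)/((k:ℝ)+1) + a^k ≤ (a+1)^(k+1)/((k:ℝ)+1) := by
      rw [div_add' _ _ _ (by positivity : ((k:ℝ)+1) ≠ 0)]
      apply div_le_div_of_nonneg_right ?h (by positivity)
      · calc a^(k+1) + a^k * ((k:ℝ)+1) = a^(k+1) + ((k:ℝ)+1) * a^k := by ring
          _ ≤ (a+1)^(k+1) := key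
    push_cast
    push_cast at ih
    calc (∑ i ∈ Finset.range (n+1), (i:ℝ)^k) + a^k ≤ a^(k+1)/((k:ℝ)+1) + a^k := by
          apply add_le_add_left
          simpa [ha] using ih
      _ ≤ (a+1)^(k+1)/((k:ℝ)+1) := hstep
      _ = ((n:ℝ)+1+1)^(k+1)/((k:ℝ)+1) := by rw [ha]

theorem core_gronwall (hu : Integrable u volume) (hu0 : ∀ y, 0 ≤ u y) (k : ℕ) (x : ℝ) :
    (∫ y in Iic x, u y * primF u y ^ k) ≤ primF u x ^ (k+1) / ((k:ℝ)+1) := by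
  have hF0 : ∀ z, 0 ≤ primF u z := primF_nonneg hu0
  have hFmono : Monotone (primF u) := primF_mono hu hu0
  have hcont : Continuous (primF u) := continuous_primF hu
  -- piecewise bound
  have hpiece : ∀ a b : ℝ, a ≤ b →
      (∫ y in Ioc a b, u y * primF u y ^ k) ≤ primF u b ^ k * (primF u b - primF u a) := by
    intro a b hab
    have h1 : (∫ y in Ioc a b, u y * primF u y ^ k) ≤ ∫ y in Ioc a b, u y * primF u b ^ k := by
      apply setIntegral_mono_on (integrableOn_mul_primF_pow hu hu0 k _)
        ((hu.restrict (s := Ioc a b)).mul_const _) measurableSet_Ioc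
      intro y hy
      exact mul_le_mul_of_nonneg_left
        (pow_le_pow_left₀ (hF0 y) (hFmono hy.2) k) (hu0 y)
    have h2 : (∫ y in Ioc a b, u y * primF u b ^ k) = (∫ y in Ioc a b, u y) * primF u b ^ k :=
      integral_mul_const _ _
    have h3 : (∫ y in Ioc a b, u y) = primF u b - primF u a := by
      rw [primF_add_Ioc hu hab]; ring
    calc (∫ y in Ioc a b, u y * primF u y ^ k) ≤ (∫ y in Ioc a b, u y) * primF u b ^ k := by
          rw [← h2]; exact h1
      _ = primF u b ^ k * (primF u b - primF u a) := by rw [h3]; ring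
  have crudeIic : ∀ z : ℝ,
      (∫ y in Iic z, u y * primF u y ^ k) ≤ primF u z ^ k * primF u z := by
    intro z
    have h1 : (∫ y in Iic z, u y * primF u y ^ k) ≤ ∫ y in Iic z, u y * primF u z ^ k := by
      apply setIntegral_mono_on (integrableOn_mul_primF_pow hu hu0 k _)
        ((hu.restrict (s := Iic z)).mul_const _) measurableSet_Iic
      intro y hy
      exact mul_le_mul_of_nonneg_left (pow_le_pow_left₀ (hF0 y) (hFmono hy) k) (hu0 y)
    have h2 : (∫ y in Iic z, u y * primF u z ^ k) = (∫ y in Iic z, u y) * primF u z ^ k :=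
      integral_mul_const _ _
    calc (∫ y in Iic z, u y * primF u y ^ k) ≤ (∫ y in Iic z, u y) * primF u z ^ k := by
          rw [← h2]; exact h1
      _ = primF u z ^ k * primF u z := by rw [primF]; ring
  rcases eq_or_lt_of_le (hF0 x) with hM | hM
  · -- primF u x = 0
    have h1 := crudeIic x
    rw [← hM] at h1
    simp only [mul_zero] at h1
    rw [← hM]
    rw [zero_pow (by omega : k + 1 ≠ 0), zero_div]
    exact h1
  · -- main case
    have key : ∀ n : ℕ, 1 ≤ n → (∫ y in Iic x, u y * primF u y ^ k)
        ≤ (((n:ℝ)+1)/n)^(k+1) * (primF u x ^(k+1) / ((k:ℝ)+1)) := by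
      intro n hn
      have hnR : (0:ℝ) < n := by exact_mod_cast hn
      set δ := primF u x / n with hδdef
      have hδ : 0 < δ := div_pos hM hnR
      have hnδ : (n:ℝ) * δ = primF u x := by
        rw [hδdef]; field_simp
      obtain ⟨w, hwx, hwδ⟩ : ∃ w, w ≤ x ∧ primF u w < δ := by
        have hev : ∀ᶠ w in atBot, primF u w < δ :=
          (tendsto_primF_atBot hu).eventually_lt_const hδ
        obtain ⟨w, hw1, hw2⟩ := (hev.and (eventually_le_atBot x)).exists
        exact ⟨w, hw2, hw1⟩
      have hivt : ∀ j : ℕ, ∃ t, t ∈ Icc w x ∧ (1 ≤ j → j ≤ n → primF u t = j * δ) := by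
        intro j
        by_cases hj : 1 ≤ j ∧ j ≤ n
        · have hmem : (j:ℝ) * δ ∈ Icc (primF u w) (primF u x) := by
            constructor
            · have h5 : δ ≤ j * δ := le_mul_of_one_le_left hδ.le (by exact_mod_cast hj.1)
              linarith
            · have h6 : (j:ℝ) * δ ≤ n * δ := by
                apply mul_le_mul_of_nonneg_right _ hδ.le
                exact_mod_cast hj.2
              rw [hnδ] at h6
              exact h6
          obtain ⟨tt, htt, hFtt⟩ := intermediate_value_Icc hwx hcont.continuousOn hmem
          exact ⟨tt, htt, fun _ _ => hFtt⟩
        · exact ⟨x, ⟨hwx, le_rfl⟩, fun h1 h2 => absurd ⟨h1, h2⟩ hj⟩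
      choose t ht hFt using hivt
      have htmono : ∀ j, 1 ≤ j → j + 1 ≤ n → t j ≤ t (j+1) := by
        intro j h1 h2
        by_contra hlt
        push_neg at hlt
        have h3 := hFmono hlt.le
        rw [hFt (j+1) (by omega) h2, hFt j h1 (by omega)] at h3
        have h4 : ((j:ℝ)+1) * δ ≤ (j:ℝ) * δ := by push_cast at h3 ⊢; linarith
        nlinarith
      have hmain : ∀ j : ℕ, 1 ≤ j → j ≤ n →
          (∫ y in Iic (t j), u y * primF u y ^ k)
            ≤ (∑ i ∈ Finset.Icc 1 j, ((i:ℝ) * δ)^k) * δ := by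
        intro j h1
        induction j, h1 using Nat.le_induction with
        | base =>
          intro hjn
          have hb := crudeIic (t 1)
          rw [hFt 1 le_rfl hjn] at hb
          rw [Finset.Icc_self, Finset.sum_singleton]
          simpa using hb
        | succ j hj1 ihj =>
          intro hj1n
          have hjn : j ≤ n := by omega
          have hsplit : (∫ y in Iic (t (j+1)), u y * primF u y ^ k) =
              (∫ y in Iic (t j), u y * primF u y ^ k)
                + (∫ y in Ioc (t j) (t (j+1)), u y * primF u y ^ k) := by
            rw [← setIntegral_union (Iic_disjoint_Ioc le_rfl) measurableSet_Ioc
              (integrableOn_mul_primF_pow hu hu0 k _) (integrableOn_mul_primF_pow hu hu0 k _),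
              Iic_union_Ioc_eq_Iic (htmono j hj1 hj1n)]
          rw [hsplit, Finset.sum_Icc_succ_top (by omega : 1 ≤ j+1), add_mul]
          apply add_le_add (ihj hjn)
          have hp := hpiece (t j) (t (j+1)) (htmono j hj1 hj1n)
          rw [hFt (j+1) (by omega) hj1n, hFt j hj1 hjn] at hp
          calc (∫ y in Ioc (t j) (t (j+1)), u y * primF u y ^ k)
              ≤ (((j+1 : ℕ):ℝ) * δ)^k * (((j+1 : ℕ):ℝ) * δ - ((j : ℕ):ℝ) * δ) := hp
            _ = (((j+1 : ℕ):ℝ) * δ)^k * δ := by push_cast; ring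
      -- final assembly over Iic x
      have htnx : t n ≤ x := (ht n).2
      have hsplitx : (∫ y in Iic x, u y * primF u y ^ k) =
          (∫ y in Iic (t n), u y * primF u y ^ k)
            + (∫ y in Ioc (t n) x, u y * primF u y ^ k) := by
        rw [← setIntegral_union (Iic_disjoint_Ioc le_rfl) measurableSet_Ioc
          (integrableOn_mul_primF_pow hu hu0 k _) (integrableOn_mul_primF_pow hu hu0 k _),
          Iic_union_Ioc_eq_Iic htnx]
      have hlast : (∫ y in Ioc (t n) x, u y * primF u y ^ k) ≤ 0 := by
        have hp := hpiece (t n) x htnx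
        rw [hFt n hn le_rfl] at hp
        calc (∫ y in Ioc (t n) x, u y * primF u y ^ k)
            ≤ primF u x ^ k * (primF u x - (n:ℝ) * δ) := hp
          _ = 0 := by rw [hnδ]; ring
      have hsum : (∑ i ∈ Finset.Icc 1 n, ((i:ℝ) * δ)^k) * δ
          ≤ (((n:ℝ)+1)/n)^(k+1) * (primF u x ^(k+1)/((k:ℝ)+1)) := by
        have h7 : (∑ i ∈ Finset.Icc 1 n, ((i:ℝ) * δ)^k)
            = (∑ i ∈ Finset.Icc 1 n, (i:ℝ)^k) * δ^k := by
          rw [Finset.sum_mul]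
          apply Finset.sum_congr rfl
          intro i _
          rw [mul_pow]
        have h8 : (∑ i ∈ Finset.Icc 1 n, (i:ℝ)^k) ≤ ∑ i ∈ Finset.range (n+1), (i:ℝ)^k := by
          apply Finset.sum_le_sum_of_subset_of_nonneg
          · intro m hm
            rw [Finset.mem_range]
            rw [Finset.mem_Icc] at hm
            omega
          · intro m _ _
            positivity
        have h89 := h8.trans (sum_range_pow_le n k)
        have h10 : (((n:ℝ)+1)^(k+1)/((k:ℝ)+1)) * δ^k * δ
            = (((n:ℝ)+1)/n)^(k+1) * (primF u x ^(k+1)/((k:ℝ)+1)) := by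
          rw [hδdef]
          rw [div_pow, div_pow, pow_succ, pow_succ]
          field_simp
          ring
        calc (∑ i ∈ Finset.Icc 1 n, ((i:ℝ) * δ)^k) * δ
            = (∑ i ∈ Finset.Icc 1 n, (i:ℝ)^k) * δ^k * δ := by rw [h7]
          _ ≤ (((n:ℝ)+1)^(k+1)/((k:ℝ)+1)) * δ^k * δ := by gcongr
          _ = (((n:ℝ)+1)/n)^(k+1) * (primF u x ^(k+1)/((k:ℝ)+1)) := h10
      calc (∫ y in Iic x, u y * primF u y ^ k)
          = (∫ y in Iic (t n), u y * primF u y ^ k)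
              + (∫ y in Ioc (t n) x, u y * primF u y ^ k) := hsplitx
        _ ≤ (∑ i ∈ Finset.Icc 1 n, ((i:ℝ) * δ)^k) * δ + 0 :=
            add_le_add (hmain n hn le_rfl) hlast
        _ = (∑ i ∈ Finset.Icc 1 n, ((i:ℝ) * δ)^k) * δ := add_zero _
        _ ≤ (((n:ℝ)+1)/n)^(k+1) * (primF u x ^(k+1)/((k:ℝ)+1)) := hsum
    have hlim : Tendsto (fun n : ℕ => (((n:ℝ)+1)/n)^(k+1) * (primF u x ^(k+1)/((k:ℝ)+1)))
        atTop (𝓝 (1 * (primF u x ^(k+1)/((k:ℝ)+1)))) := by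
      apply Tendsto.mul_const
      have h1 : Tendsto (fun n : ℕ => ((n:ℝ)+1)/n) atTop (𝓝 1) := by
        have h2 : (fun n : ℕ => (1:ℝ) + 1/n) =ᶠ[atTop] fun n : ℕ => ((n:ℝ)+1)/n := by
          filter_upwards [eventually_ge_atTop 1] with n hn
          have hn0 : (n:ℝ) ≠ 0 := by
            have h3 : (1:ℝ) ≤ n := by exact_mod_cast hn
            linarith
          field_simp
        have h3 : Tendsto (fun n : ℕ => (1:ℝ) + 1/n) atTop (𝓝 (1 + 0)) :=
          tendsto_const_nhds.add tendsto_one_div_atTop_nhds_zero_nat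
        rw [add_zero] at h3
        exact h3.congr' h2
      have h4 := h1.pow (k+1)
      simpa using h4
    have hfin := ge_of_tendsto hlim (eventually_atTop.2 ⟨1, fun n hn => key n hn⟩)
    rw [one_mul] at hfin
    exact hfin

end prim
end JostAux

namespace JostAux
open Set Metric

instance : MeasurableSpace V := borel V
instance : BorelSpace V := ⟨rfl⟩

/-! ### Picard iterates -/

def picard (U : ℝ → Mat3) : ℕ → ℝ → ℂ → V
  | 0 => fun _ _ => e1v
  | (k+1) => fun x lam => ∫ y in Iic x, appD lam (x - y) (Uc U y (picard U k y lam))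

section helpers
variable {U : ℝ → Mat3}

lemma measurable_component {w : ℝ → V} (hw : Measurable w) (j : Fin 3) :
    Measurable fun y => w y j := by
  have hc : Continuous fun v : V => v j :=
    (continuous_apply j).comp (PiLp.continuous_ofLp 2 (fun _ : Fin 3 => ℂ))
  exact hc.measurable.comp hw

lemma measurable_Uc_apply (hUmeas : ∀ i j, Measurable fun y => U y i j)
    {w : ℝ → V} (hw : Measurable w) :
    Measurable fun y => Uc U y (w y) := by
  have h1 : (fun y => Uc U y (w y)) =
      fun y => ((WithLp.equiv 2 (Fin 3 → ℂ)).symm (fun i => ∑ j, U y i j * w y j) : V) := by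
    funext y
    ext i
    rw [Uc_apply]
    simp [Matrix.mulVec, dotProduct]
  rw [h1]
  apply (PiLp.continuous_toLp 2 (fun _ : Fin 3 => ℂ)).measurable.comp
  apply measurable_pi_lambda
  intro i
  apply Finset.measurable_sum
  intro j _
  exact (hUmeas i j).mul (measurable_component hw j)

lemma measurable_integrand (hUmeas : ∀ i j, Measurable fun y => U y i j)
    {w : ℝ → V} (hw : Measurable w) (lam : ℂ) (x : ℝ) :
    Measurable fun y => appD lam (x - y) (Uc U y (w y)) := by
  have h1 : Measurable fun y => Uc U y (w y) := measurable_Uc_apply hUmeas hw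
  apply Measurable.add
  · exact T0.continuous.measurable.comp h1
  · apply Measurable.fun_smul
    · apply Continuous.measurable
      apply Complex.continuous_exp.comp
      have : Continuous fun y : ℝ => ((x - y : ℝ) : ℂ) :=
        Complex.continuous_ofReal.comp (continuous_const.sub continuous_id)
      continuity
    · exact T1.continuous.measurable.comp h1

lemma norm_integrand_le {lam : ℂ} (hlam : 0 ≤ lam.im) {x y : ℝ} (hyx : y ≤ x) (v : V) :
    ‖appD lam (x - y) (Uc U y v)‖ ≤ opNorm (U y) * ‖v‖ :=
  (norm_appD_le hlam (by linarith) _).trans (norm_Uc_le U y v)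

lemma integrableOn_integrand (hUmeas : ∀ i j, Measurable fun y => U y i j)
    (hUint : Integrable (fun y => opNorm (U y)) volume)
    {w : ℝ → V} (hw : Measurable w) {C : ℝ} (hbw : ∀ y, ‖w y‖ ≤ C)
    {lam : ℂ} (hlam : 0 ≤ lam.im) (x : ℝ) :
    IntegrableOn (fun y => appD lam (x - y) (Uc U y (w y))) (Iic x) volume := by
  apply Integrable.mono' ((hUint.restrict (s := Iic x)).mul_const C)
  · exact (measurable_integrand hUmeas hw lam x).aestronglyMeasurable
  · rw [ae_restrict_iff' measurableSet_Iic]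
    refine Filter.Eventually.of_forall fun y hy => ?_
    exact (norm_integrand_le hlam hy _).trans
      (mul_le_mul_of_nonneg_left (hbw y) (opNorm_nonneg _))

lemma hasDerivAt_expfac (t : ℝ) (mu : ℂ) :
    HasDerivAt (fun z : ℂ => Complex.exp (2 * I * z * t))
      ((2 * I * (t:ℂ)) * Complex.exp (2 * I * mu * t)) mu := by
  have h1 : HasDerivAt (fun z : ℂ => 2 * I * z * t) (2 * I * (t:ℂ)) mu := by
    have h2 := (hasDerivAt_id mu).const_mul (2 * I * (t:ℂ))
    simp only [id_eq, mul_one] at h2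
    have h3 : (fun z : ℂ => 2 * I * (t:ℂ) * z) = fun z : ℂ => 2 * I * z * t := by
      funext z; ring
    rw [h3] at h2
    exact h2
  have h4 := h1.cexp
  rw [mul_comm (2 * I * (t:ℂ))]
  exact h4

lemma norm_deriv_expfac {mu : ℂ} {ε t : ℝ} (hε : 0 < ε) (hmu : ε ≤ mu.im) (ht : 0 ≤ t) :
    ‖(2 * I * (t:ℂ)) * Complex.exp (2 * I * mu * t)‖ ≤ 1 / ε := by
  rw [norm_mul]
  have h1 : ‖(2 * I * (t:ℂ))‖ = 2 * t := by
    rw [norm_mul, norm_mul, Complex.norm_I, Complex.norm_real, Real.norm_eq_abs,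
      _root_.abs_of_nonneg ht]
    norm_num
  have h2 : ‖Complex.exp (2 * I * mu * t)‖ = Real.exp (-(2 * t * mu.im)) := by
    rw [Complex.norm_exp]
    congr 1
    simp [Complex.mul_re, Complex.mul_im]
    ring
  rw [h1, h2]
  have h3 : Real.exp (-(2 * t * mu.im)) ≤ Real.exp (-(2 * t * ε)) := by
    apply Real.exp_le_exp.2
    nlinarith
  have h5 : (2 * t * ε) * Real.exp (-(2 * t * ε)) ≤ 1 := by
    rw [Real.exp_neg]
    rw [mul_inv_le_iff₀ (Real.exp_pos _)]
    have h6 := Real.add_one_le_exp (2 * t * ε)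
    nlinarith [Real.exp_pos (2*t*ε)]
  have hεne : ε ≠ 0 := ne_of_gt hε
  calc 2 * t * Real.exp (-(2 * t * mu.im)) ≤ 2 * t * Real.exp (-(2 * t * ε)) := by
        apply mul_le_mul_of_nonneg_left h3 (by positivity)
    _ = (1/ε) * ((2 * t * ε) * Real.exp (-(2 * t * ε))) := by field_simp
    _ ≤ (1/ε) * 1 := by
        apply mul_le_mul_of_nonneg_left h5 (by positivity)
    _ = 1 / ε := mul_one _

lemma measurable_deriv_lim {p : ℝ → ℂ → V} {d : ℝ → ℂ → V}
    (hp : ∀ mu : ℂ, 0 ≤ mu.im → Measurable fun y => p y mu)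
    (hd : ∀ y lam, 0 < Complex.im lam → HasDerivAt (fun mu => p y mu) (d y lam) lam)
    {lam : ℂ} (hlam : 0 < lam.im) : Measurable fun y => d y lam := by
  set z : ℕ → ℂ := fun m => lam + ((1/((m:ℝ)+1) : ℝ) : ℂ) * I with hz
  have him : ∀ m, (z m).im = lam.im + 1/((m:ℝ)+1) := by
    intro m
    simp only [hz]
    rw [Complex.add_im]
    simp only [Complex.mul_im, Complex.I_re, Complex.I_im, Complex.ofReal_re,
      Complex.ofReal_im, mul_one, mul_zero, zero_mul, add_zero, zero_add]
  have hzim : ∀ m, 0 < (z m).im := by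
    intro m
    rw [him m]
    positivity
  have hzne : ∀ m, z m ≠ lam := by
    intro m h
    have : (z m).im = lam.im := by rw [h]
    rw [him m] at this
    have hp1 : (0:ℝ) < 1/((m:ℝ)+1) := by positivity
    linarith
  have hztend : Tendsto z atTop (𝓝[≠] lam) := by
    rw [tendsto_nhdsWithin_iff]
    constructor
    · have hr : Tendsto (fun m : ℕ => ((1/((m:ℝ)+1) : ℝ) : ℂ)) atTop (𝓝 ((0:ℝ):ℂ)) :=
        (Complex.continuous_ofReal.tendsto 0).comp tendsto_one_div_add_atTop_nhds_zero_nat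
      have h5 := Tendsto.add (tendsto_const_nhds (x := lam)) (hr.mul_const I)
      have h6 : lam + ((0:ℝ):ℂ) * I = lam := by simp
      rw [h6] at h5
      exact h5
    · exact Filter.Eventually.of_forall fun m => hzne m
  apply measurable_of_tendsto_metrizable
    (f := fun m y => (z m - lam)⁻¹ • (p y (z m) - p y lam))
  · intro m
    exact (((hp (z m) (hzim m).le).sub (hp lam hlam.le))).const_smul ((z m - lam)⁻¹)
  · rw [tendsto_pi_nhds]
    intro y
    have h1 := (hasDerivAt_iff_tendsto_slope).1 (hd y lam hlam)
    have h2 := h1.comp hztend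
    have h3 : (slope (fun mu => p y mu) lam ∘ z)
        = fun m => (z m - lam)⁻¹ • (p y (z m) - p y lam) := by
      funext m
      simp [Function.comp, slope_def_module]
    rw [h3] at h2
    exact h2

end helpers
end JostAux

namespace JostAux
open Set Metric

structure Good (U : ℝ → Mat3) (k : ℕ) : Prop where
  contx : ∀ lam : ℂ, 0 ≤ lam.im → Continuous fun x => picard U k x lam
  bound : ∀ lam : ℂ, 0 ≤ lam.im → ∀ x : ℝ,
    ‖picard U k x lam‖ ≤ primF (fun y => opNorm (U y)) x ^ k / (k.factorial : ℝ)
  contlam : ∀ x : ℝ, ContinuousOn (fun lam => picard U k x lam) {lam : ℂ | 0 ≤ lam.im}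
  deriv : ∃ d : ℝ → ℂ → V,
    (∀ x lam, 0 < Complex.im lam → HasDerivAt (fun mu => picard U k x mu) (d x lam) lam) ∧
    (∀ ε : ℝ, 0 < ε → ∃ H : ℝ, 0 ≤ H ∧ ∀ x lam, ε ≤ Complex.im lam → ‖d x lam‖ ≤ H)

lemma good_zero (U : ℝ → Mat3) : Good U 0 := by
  refine ⟨fun lam _ => continuous_const, fun lam _ x => ?_, fun x => continuousOn_const,
    ⟨fun _ _ => 0, fun x lam _ => hasDerivAt_const _ _,
      fun ε _ => ⟨0, le_rfl, fun x lam _ => by simp⟩⟩⟩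
  show ‖e1v‖ ≤ _
  rw [norm_e1v]
  simp

lemma norm_Gterm_le {U : ℝ → Mat3} {mu : ℂ} {ε t : ℝ} (hε : 0 < ε) (hmu : ε ≤ mu.im)
    (ht : 0 ≤ t) (y : ℝ) (vd vp : V) {Hd Cp : ℝ} (hvd : ‖vd‖ ≤ Hd) (hvp : ‖vp‖ ≤ Cp) :
    ‖T0 (Uc U y vd) + (Complex.exp (2*I*mu*(t:ℂ)) • T1 (Uc U y vd)
      + ((2*I*(t:ℂ)) * Complex.exp (2*I*mu*(t:ℂ))) • T1 (Uc U y vp))‖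
      ≤ opNorm (U y) * (Hd + Hd + Cp * (1/ε)) := by
  have h0 : 0 ≤ mu.im := le_trans hε.le hmu
  have hd' : ‖Uc U y vd‖ ≤ opNorm (U y) * Hd :=
    (norm_Uc_le U y vd).trans (mul_le_mul_of_nonneg_left hvd (opNorm_nonneg _))
  have hp' : ‖Uc U y vp‖ ≤ opNorm (U y) * Cp :=
    (norm_Uc_le U y vp).trans (mul_le_mul_of_nonneg_left hvp (opNorm_nonneg _))
  have hHd0 : 0 ≤ opNorm (U y) * Hd := le_trans (norm_nonneg _) hd'
  have hCp0 : 0 ≤ opNorm (U y) * Cp := le_trans (norm_nonneg _) hp'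
  have h1 : ‖T0 (Uc U y vd)‖ ≤ opNorm (U y) * Hd := (norm_T0_le _).trans hd'
  have h2 : ‖Complex.exp (2*I*mu*(t:ℂ)) • T1 (Uc U y vd)‖ ≤ opNorm (U y) * Hd := by
    rw [norm_smul]
    calc ‖Complex.exp (2*I*mu*(t:ℂ))‖ * ‖T1 (Uc U y vd)‖
        ≤ 1 * (opNorm (U y) * Hd) :=
          mul_le_mul (norm_exp_fac h0 ht) ((norm_T1_le _).trans hd') (norm_nonneg _) zero_le_one
      _ = opNorm (U y) * Hd := one_mul _
  have h3 : ‖((2*I*(t:ℂ)) * Complex.exp (2*I*mu*(t:ℂ))) • T1 (Uc U y vp)‖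
      ≤ (1/ε) * (opNorm (U y) * Cp) := by
    rw [norm_smul]
    exact mul_le_mul (norm_deriv_expfac hε hmu ht) ((norm_T1_le _).trans hp')
      (norm_nonneg _) (by positivity)
  calc ‖T0 (Uc U y vd) + (Complex.exp (2*I*mu*(t:ℂ)) • T1 (Uc U y vd)
      + ((2*I*(t:ℂ)) * Complex.exp (2*I*mu*(t:ℂ))) • T1 (Uc U y vp))‖
      ≤ ‖T0 (Uc U y vd)‖ + (‖Complex.exp (2*I*mu*(t:ℂ)) • T1 (Uc U y vd)‖
          + ‖((2*I*(t:ℂ)) * Complex.exp (2*I*mu*(t:ℂ))) • T1 (Uc U y vp)‖) :=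
        (norm_add_le _ _).trans (by gcongr; exact norm_add_le _ _)
    _ ≤ opNorm (U y) * Hd + (opNorm (U y) * Hd + (1/ε) * (opNorm (U y) * Cp)) :=
        add_le_add h1 (add_le_add h2 h3)
    _ = opNorm (U y) * (Hd + Hd + Cp * (1/ε)) := by ring

set_option maxHeartbeats 1000000 in
theorem good_succ {U : ℝ → Mat3} (hUmeas : ∀ i j, Measurable fun y => U y i j)
    (hUint : Integrable (fun y => opNorm (U y)) volume)
    {k : ℕ} (IH : Good U k) : Good U (k+1) := by
  have hu0 : ∀ y, 0 ≤ opNorm (U y) := fun y => opNorm_nonneg _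
  set IU : ℝ := ∫ y, opNorm (U y) with hIU
  have hIU0 : 0 ≤ IU := integral_nonneg hu0
  set Ck : ℝ := IU ^ k / (k.factorial : ℝ) with hCk
  have hCk0 : 0 ≤ Ck := by positivity
  have hFle : ∀ x, primF (fun y => opNorm (U y)) x ≤ IU := primF_le_integral hUint hu0
  have hF0 : ∀ x, 0 ≤ primF (fun y => opNorm (U y)) x := primF_nonneg hu0
  have hpm : ∀ lam : ℂ, 0 ≤ lam.im → Measurable fun y => picard U k y lam :=
    fun lam hlam => (IH.contx lam hlam).measurable
  have hpb : ∀ lam : ℂ, 0 ≤ lam.im → ∀ y, ‖picard U k y lam‖ ≤ Ck := by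
    intro lam hlam y
    refine (IH.bound lam hlam y).trans ?_
    rw [hCk]
    gcongr
    · exact hF0 y
    · exact hFle y
  have hpint : ∀ (lam : ℂ), 0 ≤ lam.im → ∀ x : ℝ, IntegrableOn
      (fun y => appD lam (x - y) (Uc U y (picard U k y lam))) (Iic x) volume :=
    fun lam hlam x => integrableOn_integrand hUmeas hUint (hpm lam hlam) (hpb lam hlam) hlam x
  constructor
  -- continuity in x
  · intro lam hlam
    rw [continuous_iff_continuousAt]
    intro x₀
    have key : Tendsto (fun x => ∫ y, Set.indicator (Iic x)
        (fun y => appD lam (x - y) (Uc U y (picard U k y lam))) y) (𝓝 x₀)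
        (𝓝 (∫ y, Set.indicator (Iic x₀)
          (fun y => appD lam (x₀ - y) (Uc U y (picard U k y lam))) y)) := by
      apply tendsto_integral_filter_of_dominated_convergence (bound := fun y => opNorm (U y) * Ck)
      · exact Filter.Eventually.of_forall fun x =>
          ((measurable_integrand hUmeas (hpm lam hlam) lam x).aestronglyMeasurable.indicator
            measurableSet_Iic)
      · refine Filter.Eventually.of_forall fun x => Filter.Eventually.of_forall fun y => ?_
        by_cases hy : y ∈ Iic x
        · rw [Set.indicator_of_mem hy]
          exact (norm_integrand_le hlam hy _).trans
            (mul_le_mul_of_nonneg_left (hpb lam hlam y) (hu0 y))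
        · rw [Set.indicator_of_notMem hy]
          simp only [norm_zero]
          exact mul_nonneg (hu0 y) hCk0
      · exact hUint.mul_const Ck
      · filter_upwards [ae_ne x₀] with y hy
        apply tendsto_indicator_Iic
          (g := fun x y => appD lam (x - y) (Uc U y (picard U k y lam))) hy
        have hc : Continuous fun x : ℝ => appD lam (x - y) (Uc U y (picard U k y lam)) := by
          apply Continuous.add continuous_const
          apply Continuous.fun_smul ?_ continuous_const
          exact Complex.continuous_exp.comp (continuous_const.mul
            (Complex.continuous_ofReal.comp (continuous_id.sub continuous_const)))
        exact hc.tendsto x₀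
    have hrw : ∀ x : ℝ, picard U (k+1) x lam = ∫ y, Set.indicator (Iic x)
        (fun y => appD lam (x - y) (Uc U y (picard U k y lam))) y := by
      intro x
      rw [show picard U (k+1) x lam
        = ∫ y in Iic x, appD lam (x - y) (Uc U y (picard U k y lam)) from rfl,
        integral_indicator measurableSet_Iic]
    rw [ContinuousAt]
    simp only [hrw]
    exact key
  -- bound
  · intro lam hlam x
    have hint : IntegrableOn
        (fun y => opNorm (U y) * primF (fun y => opNorm (U y)) y ^ k / (k.factorial:ℝ))
        (Iic x) volume :=
      (integrableOn_mul_primF_pow hUint hu0 k _).div_const _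
    have h1 : ‖picard U (k+1) x lam‖
        ≤ ∫ y in Iic x, opNorm (U y) * primF (fun y => opNorm (U y)) y ^ k / (k.factorial:ℝ) := by
      refine norm_integral_le_of_norm_le hint ?_
      rw [ae_restrict_iff' measurableSet_Iic]
      refine Filter.Eventually.of_forall fun y hy => ?_
      calc ‖appD lam (x - y) (Uc U y (picard U k y lam))‖
          ≤ opNorm (U y) * (primF (fun y => opNorm (U y)) y ^ k / (k.factorial:ℝ)) :=
            (norm_integrand_le hlam hy _).trans
              (mul_le_mul_of_nonneg_left (IH.bound lam hlam y) (hu0 y))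
        _ = opNorm (U y) * primF (fun y => opNorm (U y)) y ^ k / (k.factorial:ℝ) := by ring
    have h2 : (∫ y in Iic x, opNorm (U y) * primF (fun y => opNorm (U y)) y ^ k / (k.factorial:ℝ))
        = (∫ y in Iic x, opNorm (U y) * primF (fun y => opNorm (U y)) y ^ k) / (k.factorial:ℝ) :=
      integral_div _ _
    have h3 := core_gronwall hUint hu0 k x
    have hkf : (0:ℝ) < (k.factorial:ℝ) := by exact_mod_cast k.factorial_pos
    calc ‖picard U (k+1) x lam‖
        ≤ (∫ y in Iic x, opNorm (U y) * primF (fun y => opNorm (U y)) y ^ k) / (k.factorial:ℝ) := by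
          rw [← h2]; exact h1
      _ ≤ (primF (fun y => opNorm (U y)) x ^ (k+1) / ((k:ℝ)+1)) / (k.factorial:ℝ) := by gcongr
      _ = primF (fun y => opNorm (U y)) x ^ (k+1) / ((k+1).factorial : ℝ) := by
          rw [div_div, Nat.factorial_succ]
          push_cast
          ring_nf
  -- continuity in lam
  · intro x
    intro lam₀ hlam₀
    have key : Tendsto (fun lam => ∫ y in Iic x, appD lam (x - y) (Uc U y (picard U k y lam)))
        (𝓝[{lam : ℂ | 0 ≤ lam.im}] lam₀)
        (𝓝 (∫ y in Iic x, appD lam₀ (x - y) (Uc U y (picard U k y lam₀)))) := by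
      apply tendsto_integral_filter_of_dominated_convergence
        (bound := fun y => opNorm (U y) * Ck)
      · exact Filter.eventually_of_mem self_mem_nhdsWithin fun lam hlam =>
          (measurable_integrand hUmeas (hpm lam hlam) lam x).aestronglyMeasurable
      · refine Filter.eventually_of_mem self_mem_nhdsWithin fun lam hlam => ?_
        rw [ae_restrict_iff' measurableSet_Iic]
        exact Filter.Eventually.of_forall fun y hy => (norm_integrand_le hlam hy _).trans
          (mul_le_mul_of_nonneg_left (hpb lam hlam y) (hu0 y))
      · exact (hUint.restrict (s := Iic x)).mul_const Ck
      · rw [ae_restrict_iff' measurableSet_Iic]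
        refine Filter.Eventually.of_forall fun y _ => ?_
        have hcw : ContinuousWithinAt (fun lam => Uc U y (picard U k y lam))
            {lam : ℂ | 0 ≤ lam.im} lam₀ :=
          ((Uc U y).continuous.continuousAt).comp_continuousWithinAt
            ((IH.contlam y) lam₀ hlam₀)
        have hexp : ContinuousWithinAt
            (fun lam : ℂ => Complex.exp (2*I*lam*((x - y : ℝ) : ℂ)))
            {lam : ℂ | 0 ≤ lam.im} lam₀ := by
          apply Continuous.continuousWithinAt
          exact Complex.continuous_exp.comp ((continuous_const.mul continuous_id).mul
            continuous_const)
        exact ContinuousWithinAt.add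
          ((T0.continuous.continuousAt).comp_continuousWithinAt hcw)
          (hexp.smul ((T1.continuous.continuousAt).comp_continuousWithinAt hcw))
    exact key
  -- derivative
  · obtain ⟨d, hd, hdb⟩ := IH.deriv
    refine ⟨fun x lam => ∫ y in Iic x,
      (T0 (Uc U y (d y lam)) +
        (Complex.exp (2*I*lam*((x - y : ℝ):ℂ)) • T1 (Uc U y (d y lam)) +
          ((2 * I * ((x - y : ℝ):ℂ)) * Complex.exp (2*I*lam*((x - y : ℝ):ℂ)))
            • T1 (Uc U y (picard U k y lam)))), ?_, ?_⟩
    · intro x lam hlam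
      set ε : ℝ := lam.im / 2 with hε
      have hε0 : 0 < ε := half_pos hlam
      have hball : ∀ mu ∈ ball lam ε, ε ≤ mu.im ∧ 0 < mu.im := by
        intro mu hmu
        rw [mem_ball, Complex.dist_eq] at hmu
        have h1 : |(mu - lam).im| ≤ ‖mu - lam‖ := Complex.abs_im_le_norm _
        rw [Complex.sub_im] at h1
        have h2 : |mu.im - lam.im| < ε := lt_of_le_of_lt h1 hmu
        have h3 := abs_lt.1 h2
        constructor
        · rw [hε] at h3 ⊢
          linarith [h3.1]
        · rw [hε] at h3
          linarith [h3.1]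
      obtain ⟨Hd, hHd0, hHd⟩ := hdb ε hε0
      have hdm : Measurable fun y => d y lam :=
        measurable_deriv_lim (fun mu hmu => hpm mu hmu) hd hlam
      have key := hasDerivAt_integral_of_dominated_loc_of_deriv_le
        (μ := volume.restrict (Iic x)) (𝕜 := ℂ)
        (F := fun mu y => appD mu (x - y) (Uc U y (picard U k y mu)))
        (F' := fun mu y => T0 (Uc U y (d y mu)) +
          (Complex.exp (2*I*mu*((x - y : ℝ):ℂ)) • T1 (Uc U y (d y mu)) +
            ((2 * I * ((x - y : ℝ):ℂ)) * Complex.exp (2*I*mu*((x - y : ℝ):ℂ)))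
              • T1 (Uc U y (picard U k y mu))))
        (x₀ := lam) (bound := fun y => opNorm (U y) * (Hd + Hd + Ck * (1/ε)))
        (ball_mem_nhds _ hε0) ?_ ?_ ?_ ?_ ?_ ?_
      · exact key.2
      · refine Filter.eventually_of_mem (ball_mem_nhds _ hε0) fun mu hmu => ?_
        exact (measurable_integrand hUmeas (hpm mu (hball mu hmu).2.le) mu x).aestronglyMeasurable
      · exact hpint lam hlam.le x
      · apply Measurable.aestronglyMeasurable
        have h1 : Measurable (fun y => Uc U y (d y lam)) := measurable_Uc_apply hUmeas hdm
        have h2 : Measurable (fun y => Uc U y (picard U k y lam)) :=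
          measurable_Uc_apply hUmeas (hpm lam hlam.le)
        apply Measurable.add
        · exact T0.continuous.measurable.comp h1
        · apply Measurable.add
          · apply Measurable.fun_smul
            · apply Continuous.measurable
              exact Complex.continuous_exp.comp (continuous_const.mul
                (Complex.continuous_ofReal.comp (continuous_const.sub continuous_id)))
            · exact T1.continuous.measurable.comp h1
          · apply Measurable.fun_smul
            · apply Continuous.measurable
              exact ((continuous_const.mul
                  (Complex.continuous_ofReal.comp (continuous_const.sub continuous_id))).mul
                (Complex.continuous_exp.comp (continuous_const.mul
                  (Complex.continuous_ofReal.comp (continuous_const.sub continuous_id)))))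
            · exact T1.continuous.measurable.comp h2
      · rw [ae_restrict_iff' measurableSet_Iic]
        refine Filter.Eventually.of_forall fun y hy => ?_
        intro mu hmu
        have hmu1 : ε ≤ mu.im := (hball mu hmu).1
        exact norm_Gterm_le hε0 hmu1 (sub_nonneg.2 hy) y _ _
          (hHd y mu hmu1) (hpb mu (hball mu hmu).2.le y)
      · exact (hUint.restrict (s := Iic x)).mul_const _
      · rw [ae_restrict_iff' measurableSet_Iic]
        refine Filter.Eventually.of_forall fun y hy => ?_
        intro mu hmu
        have hmu2 : 0 < mu.im := (hball mu hmu).2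
        have hd1 : HasDerivAt (fun mu => Uc U y (picard U k y mu)) (Uc U y (d y mu)) mu :=
          ((Uc U y).hasFDerivAt).comp_hasDerivAt mu (hd y mu hmu2)
        have hT0 : HasDerivAt (fun mu => T0 (Uc U y (picard U k y mu)))
            (T0 (Uc U y (d y mu))) mu := (T0.hasFDerivAt).comp_hasDerivAt mu hd1
        have hT1 : HasDerivAt (fun mu => T1 (Uc U y (picard U k y mu)))
            (T1 (Uc U y (d y mu))) mu := (T1.hasFDerivAt).comp_hasDerivAt mu hd1
        have hexp := hasDerivAt_expfac (x - y) mu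
        have hsm := hexp.smul hT1
        have htot := hT0.add hsm
        exact htot
    · intro ε hε0
      obtain ⟨Hd, hHd0, hHd⟩ := hdb ε hε0
      refine ⟨IU * (Hd + Hd + Ck * (1/ε)), by positivity, ?_⟩
      intro x lam hlam
      have hlam0 : 0 ≤ lam.im := le_trans hε0.le hlam
      have h2 : ‖∫ y in Iic x, (T0 (Uc U y (d y lam)) +
          (Complex.exp (2*I*lam*((x - y : ℝ):ℂ)) • T1 (Uc U y (d y lam)) +
            ((2 * I * ((x - y : ℝ):ℂ)) * Complex.exp (2*I*lam*((x - y : ℝ):ℂ)))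
              • T1 (Uc U y (picard U k y lam))))‖
          ≤ ∫ y in Iic x, opNorm (U y) * (Hd + Hd + Ck * (1/ε)) := by
        refine norm_integral_le_of_norm_le ((hUint.restrict (s := Iic x)).mul_const _) ?_
        rw [ae_restrict_iff' measurableSet_Iic]
        refine Filter.Eventually.of_forall fun y hy => ?_
        exact norm_Gterm_le hε0 hlam (sub_nonneg.2 hy) y _ _
          (hHd y lam hlam) (hpb lam hlam0 y)
      have h3 : (∫ y in Iic x, opNorm (U y) * (Hd + Hd + Ck * (1/ε)))
          = primF (fun y => opNorm (U y)) x * (Hd + Hd + Ck * (1/ε)) := by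
        rw [integral_mul_const]
        rfl
      calc ‖_‖ ≤ ∫ y in Iic x, opNorm (U y) * (Hd + Hd + Ck * (1/ε)) := h2
        _ = primF (fun y => opNorm (U y)) x * (Hd + Hd + Ck * (1/ε)) := h3
        _ ≤ IU * (Hd + Hd + Ck * (1/ε)) := by
            apply mul_le_mul_of_nonneg_right (hFle x)
            positivity

lemma good (U : ℝ → Mat3) (hUmeas : ∀ i j, Measurable fun y => U y i j)
    (hUint : Integrable (fun y => opNorm (U y)) volume) : ∀ k, Good U k := by
  intro k
  induction k with
  | zero => exact good_zero U
  | succ k ih => exact good_succ hUmeas hUint ih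

end JostAux

namespace JostAux
open Set Metric

section limit
variable {U : ℝ → Mat3}

def nsol (U : ℝ → Mat3) (x : ℝ) (lam : ℂ) : V := ∑' k, picard U k x lam

lemma tsum_pow_div_factorial (a : ℝ) :
    (∑' k : ℕ, a ^ k / (k.factorial : ℝ)) = Real.exp a := by
  rw [Real.exp_eq_exp_ℝ, NormedSpace.exp_eq_tsum_div]

variable (hUmeas : ∀ i j, Measurable fun y => U y i j)
  (hUint : Integrable (fun y => opNorm (U y)) volume)

include hUmeas hUint

lemma picard_bound_global (k : ℕ) (x : ℝ) {lam : ℂ} (hlam : 0 ≤ lam.im) :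
    ‖picard U k x lam‖ ≤ (∫ y, opNorm (U y)) ^ k / (k.factorial : ℝ) := by
  refine ((good U hUmeas hUint k).bound lam hlam x).trans ?_
  gcongr
  · exact primF_nonneg (fun y => opNorm_nonneg _) x
  · exact primF_le_integral hUint (fun y => opNorm_nonneg _) x

lemma hsummable {lam : ℂ} (hlam : 0 ≤ lam.im) (x : ℝ) :
    Summable (fun k => picard U k x lam) :=
  Summable.of_norm_bounded (Real.summable_pow_div_factorial _)
    (fun k => picard_bound_global hUmeas hUint k x hlam)

lemma hsummable_norm {lam : ℂ} (hlam : 0 ≤ lam.im) (x : ℝ) :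
    Summable (fun k => ‖picard U k x lam‖) :=
  Summable.of_nonneg_of_le (fun k => norm_nonneg _)
    (fun k => picard_bound_global hUmeas hUint k x hlam)
    (Real.summable_pow_div_factorial _)

lemma nsol_norm_le {lam : ℂ} (hlam : 0 ≤ lam.im) (x : ℝ) :
    ‖nsol U x lam‖ ≤ Real.exp (∫ y, opNorm (U y)) := by
  calc ‖nsol U x lam‖ ≤ ∑' k, ‖picard U k x lam‖ :=
        norm_tsum_le_tsum_norm (hsummable_norm hUmeas hUint hlam x)
    _ ≤ ∑' k : ℕ, (∫ y, opNorm (U y)) ^ k / (k.factorial : ℝ) :=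
        Summable.tsum_le_tsum (fun k => picard_bound_global hUmeas hUint k x hlam)
          (hsummable_norm hUmeas hUint hlam x) (Real.summable_pow_div_factorial _)
    _ = Real.exp (∫ y, opNorm (U y)) := tsum_pow_div_factorial _

lemma nsol_contx {lam : ℂ} (hlam : 0 ≤ lam.im) :
    Continuous fun x => nsol U x lam := by
  apply continuous_tsum (fun k => (good U hUmeas hUint k).contx lam hlam)
    (Real.summable_pow_div_factorial (∫ y, opNorm (U y)))
  intro k x
  exact picard_bound_global hUmeas hUint k x hlam

lemma nsol_meas {lam : ℂ} (hlam : 0 ≤ lam.im) :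
    Measurable fun y => nsol U y lam := (nsol_contx hUmeas hUint hlam).measurable

lemma nsol_contlam (x : ℝ) :
    ContinuousOn (fun lam => nsol U x lam) {lam : ℂ | 0 ≤ lam.im} := by
  have h1 := tendstoUniformlyOn_tsum (f := fun k lam => picard U k x lam)
    (Real.summable_pow_div_factorial (∫ y, opNorm (U y))) (s := {lam : ℂ | 0 ≤ lam.im})
    (fun k lam hlam => picard_bound_global hUmeas hUint k x hlam)
  apply h1.continuousOn
  refine Filter.Eventually.frequently (Filter.Eventually.of_forall fun t => ?_)
  exact continuousOn_finset_sum _ fun k _ => (good U hUmeas hUint k).contlam x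

lemma nsol_diff (x : ℝ) :
    DifferentiableOn ℂ (fun lam => nsol U x lam) {lam : ℂ | 0 < lam.im} := by
  have h1 := tendstoUniformlyOn_tsum (f := fun k lam => picard U k x lam)
    (Real.summable_pow_div_factorial (∫ y, opNorm (U y))) (s := {lam : ℂ | 0 < lam.im})
    (fun k lam hlam => picard_bound_global hUmeas hUint k x (le_of_lt hlam))
  apply h1.tendstoLocallyUniformlyOn.differentiableOn
  · refine Filter.Eventually.of_forall fun t => ?_
    apply DifferentiableOn.fun_sum
    intro k _
    intro lam hlam
    obtain ⟨d, hd, _⟩ := (good U hUmeas hUint k).deriv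
    exact ((hd x lam hlam).differentiableAt).differentiableWithinAt
  · exact isOpen_lt continuous_const Complex.continuous_im

lemma nsol_eq {lam : ℂ} (hlam : 0 ≤ lam.im) (x : ℝ) :
    nsol U x lam = e1v + ∫ y in Iic x, appD lam (x - y) (Uc U y (nsol U y lam)) := by
  have hsum : ∀ y, HasSum (fun k => picard U k y lam) (nsol U y lam) :=
    fun y => (hsummable hUmeas hUint hlam y).hasSum
  have hHS : HasSum (fun k => ∫ y in Iic x, appD lam (x - y) (Uc U y (picard U k y lam)))
      (∫ y in Iic x, appD lam (x - y) (Uc U y (nsol U y lam))) := by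
    apply hasSum_integral_of_dominated_convergence
      (bound := fun k y => opNorm (U y)
        * (primF (fun y => opNorm (U y)) y ^ k / (k.factorial : ℝ)))
    · intro k
      exact (measurable_integrand hUmeas ((good U hUmeas hUint k).contx lam hlam).measurable
        lam x).aestronglyMeasurable
    · intro k
      rw [ae_restrict_iff' measurableSet_Iic]
      exact Filter.Eventually.of_forall fun y hy => (norm_integrand_le hlam hy _).trans
        (mul_le_mul_of_nonneg_left ((good U hUmeas hUint k).bound lam hlam y)
          (opNorm_nonneg _))
    · refine Filter.Eventually.of_forall fun y => ?_
      exact (Real.summable_pow_div_factorial _).mul_left _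
    · have heq : (fun y => ∑' k : ℕ, opNorm (U y)
          * (primF (fun y => opNorm (U y)) y ^ k / (k.factorial:ℝ)))
          = fun y => opNorm (U y) * Real.exp (primF (fun y => opNorm (U y)) y) := by
        funext y
        rw [tsum_mul_left, tsum_pow_div_factorial]
      rw [heq]
      have h1 := (hUint.restrict (s := Iic x)).bdd_mul
        ((Real.continuous_exp.comp (continuous_primF hUint)).aestronglyMeasurable.restrict)
        (Filter.Eventually.of_forall fun y => by
          have hre : (Real.exp ∘ primF fun y => opNorm (U y)) y
              = Real.exp (primF (fun y => opNorm (U y)) y) := rfl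
          rw [hre, Real.norm_eq_abs, _root_.abs_of_nonneg (Real.exp_pos _).le]
          exact Real.exp_le_exp.2 (primF_le_integral hUint (fun y => opNorm_nonneg _) y))
      simpa [mul_comm] using h1
    · rw [ae_restrict_iff' measurableSet_Iic]
      refine Filter.Eventually.of_forall fun y _ => ?_
      have h2 := (hsum y).mapL
        ((T0 + Complex.exp (2*I*lam*((x - y : ℝ):ℂ)) • T1).comp (Uc U y))
      have h3 : ∀ v : V, ((T0 + Complex.exp (2*I*lam*((x - y : ℝ):ℂ)) • T1).comp (Uc U y)) v
          = appD lam (x - y) (Uc U y v) := by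
        intro v
        simp [appD, ContinuousLinearMap.add_apply, ContinuousLinearMap.smul_apply,
          ContinuousLinearMap.comp_apply]
      simp only [h3] at h2
      exact h2
  have h4 : nsol U x lam = picard U 0 x lam + ∑' k, picard U (k+1) x lam :=
    Summable.tsum_eq_zero_add (hsummable hUmeas hUint hlam x)
  have h5 : (∑' k, picard U (k+1) x lam)
      = ∫ y in Iic x, appD lam (x - y) (Uc U y (nsol U y lam)) := hHS.tsum_eq
  rw [h4, h5]
  simp only [picard]

omit hUmeas hUint in
lemma e1v_component (i : Fin 3) : e1v i = e1 i := by
  rw [e1v, EuclideanSpace.single_apply, e1]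

lemma nsol_eq_component {lam : ℂ} (hlam : 0 ≤ lam.im) (x : ℝ) (i : Fin 3) :
    nsol U x lam i = e1 i + ∫ y in Iic x,
      dFac lam (x - y) i * (U y).mulVec (fun j => nsol U y lam j) i := by
  have heq := nsol_eq hUmeas hUint hlam x
  have hint : IntegrableOn (fun y => appD lam (x - y) (Uc U y (nsol U y lam))) (Iic x) volume :=
    integrableOn_integrand hUmeas hUint (nsol_meas hUmeas hUint hlam)
      (fun y => nsol_norm_le hUmeas hUint hlam y) hlam x
  have hproj := (EuclideanSpace.proj (𝕜 := ℂ) i).integral_comp_comm hint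
  calc nsol U x lam i
      = (e1v + ∫ y in Iic x, appD lam (x - y) (Uc U y (nsol U y lam))) i := by rw [heq]
    _ = e1 i + ∫ y in Iic x, (appD lam (x - y) (Uc U y (nsol U y lam))) i := by
        have h3 : (e1v + ∫ y in Iic x, appD lam (x - y) (Uc U y (nsol U y lam))) i
            = e1v i + (∫ y in Iic x, appD lam (x - y) (Uc U y (nsol U y lam))) i := rfl
        have h4 : (∫ y in Iic x, appD lam (x - y) (Uc U y (nsol U y lam))) i
            = ∫ y in Iic x, (appD lam (x - y) (Uc U y (nsol U y lam))) i := hproj.symm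
        rw [h3, e1v_component, h4]
    _ = e1 i + ∫ y in Iic x,
        dFac lam (x - y) i * (U y).mulVec (fun j => nsol U y lam j) i := by
        congr 1
        refine integral_congr_ae (Filter.Eventually.of_forall fun y => ?_)
        show appD lam (x - y) (Uc U y (nsol U y lam)) i
          = dFac lam (x - y) i * (U y).mulVec (fun j => nsol U y lam j) i
        rw [appD_apply, Uc_apply]

lemma unique_eq {lam : ℂ} (hlam : 0 ≤ lam.im) (n' : ℝ → Fin 3 → ℂ)
    (h : IsJostCol U lam n') :
    ∀ x, ((WithLp.equiv 2 (Fin 3 → ℂ)).symm (n' x) : V) = nsol U x lam := by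
  obtain ⟨hcont', ⟨C, hC⟩, heq'⟩ := h
  set w : ℝ → V := fun x => (WithLp.equiv 2 (Fin 3 → ℂ)).symm (n' x) with hw
  have hwc : Continuous w :=
    (PiLp.continuous_toLp 2 (fun _ : Fin 3 => ℂ)).comp (continuous_pi hcont')
  have hwb : ∀ x, ‖w x‖ ≤ C := by
    intro x
    rw [← vecNorm_eq_norm]
    exact hC x
  set m : ℝ → V := fun x => w x - nsol U x lam with hm
  have hmc : Continuous m := hwc.sub (nsol_contx hUmeas hUint hlam)
  set C₀ : ℝ := C + Real.exp (∫ y, opNorm (U y)) with hC₀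
  have hCnn : 0 ≤ C := le_trans (norm_nonneg (w 0)) (hwb 0)
  have hC0 : 0 ≤ C₀ := by positivity
  have hmb : ∀ x, ‖m x‖ ≤ C₀ := fun x => (norm_sub_le _ _).trans
    (add_le_add (hwb x) (nsol_norm_le hUmeas hUint hlam x))
  have hweq : ∀ x, w x = e1v + ∫ y in Iic x, appD lam (x - y) (Uc U y (w y)) := by
    intro x
    have hintw : IntegrableOn (fun y => appD lam (x - y) (Uc U y (w y))) (Iic x) volume :=
      integrableOn_integrand hUmeas hUint hwc.measurable hwb hlam x
    have hproj : ∀ i : Fin 3, (∫ y in Iic x, ((EuclideanSpace.proj (𝕜 := ℂ) i)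
        (appD lam (x - y) (Uc U y (w y)))))
        = (EuclideanSpace.proj (𝕜 := ℂ) i) (∫ y in Iic x, appD lam (x - y) (Uc U y (w y))) :=
      fun i => (EuclideanSpace.proj (𝕜 := ℂ) i).integral_comp_comm hintw
    ext i
    have h2 : (e1v + ∫ y in Iic x, appD lam (x - y) (Uc U y (w y))) i
        = e1 i + ∫ y in Iic x, (appD lam (x - y) (Uc U y (w y))) i := by
      have h3 : (e1v + ∫ y in Iic x, appD lam (x - y) (Uc U y (w y))) i
          = e1v i + (∫ y in Iic x, appD lam (x - y) (Uc U y (w y))) i := rfl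
      have h4 : (∫ y in Iic x, appD lam (x - y) (Uc U y (w y))) i
          = ∫ y in Iic x, (appD lam (x - y) (Uc U y (w y))) i := (hproj i).symm
      rw [h3, e1v_component, h4]
    calc w x i = n' x i := rfl
      _ = e1 i + ∫ y in Iic x, dFac lam (x - y) i * (U y).mulVec (n' y) i := heq' x i
      _ = e1 i + ∫ y in Iic x, (appD lam (x - y) (Uc U y (w y))) i := by
          congr 1
          refine integral_congr_ae (Filter.Eventually.of_forall fun y => ?_)
          show dFac lam (x - y) i * (U y).mulVec (n' y) i
            = appD lam (x - y) (Uc U y (w y)) i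
          rw [appD_apply, Uc_apply]
          rfl
      _ = (e1v + ∫ y in Iic x, appD lam (x - y) (Uc U y (w y))) i := h2.symm
  have hmeq : ∀ x, m x = ∫ y in Iic x, appD lam (x - y) (Uc U y (m y)) := by
    intro x
    have hintw : IntegrableOn (fun y => appD lam (x - y) (Uc U y (w y))) (Iic x) volume :=
      integrableOn_integrand hUmeas hUint hwc.measurable hwb hlam x
    have hintn : IntegrableOn (fun y => appD lam (x - y) (Uc U y (nsol U y lam)))
        (Iic x) volume :=
      integrableOn_integrand hUmeas hUint (nsol_meas hUmeas hUint hlam)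
        (fun y => nsol_norm_le hUmeas hUint hlam y) hlam x
    have h1 : m x = (∫ y in Iic x, appD lam (x - y) (Uc U y (w y)))
        - ∫ y in Iic x, appD lam (x - y) (Uc U y (nsol U y lam)) := by
      rw [hm]
      simp only
      rw [hweq x, nsol_eq hUmeas hUint hlam x]
      abel
    rw [h1, ← integral_sub hintw hintn]
    refine integral_congr_ae (Filter.Eventually.of_forall fun y => ?_)
    show appD lam (x - y) (Uc U y (w y)) - appD lam (x - y) (Uc U y (nsol U y lam))
        = appD lam (x - y) (Uc U y (m y))
    have hm' : m y = w y - nsol U y lam := rfl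
    rw [hm', map_sub]
    simp only [appD, map_sub, smul_sub]
    abel
  have hiter : ∀ k x, ‖m x‖ ≤ C₀ * (primF (fun y => opNorm (U y)) x ^ k / (k.factorial : ℝ)) := by
    intro k
    induction k with
    | zero => intro x; simpa using hmb x
    | succ k ih =>
      intro x
      rw [hmeq x]
      have h3 : (fun y => opNorm (U y)
          * (C₀ * (primF (fun y => opNorm (U y)) y ^ k / (k.factorial:ℝ))))
          = fun y => (C₀ / (k.factorial:ℝ))
            * (opNorm (U y) * primF (fun y => opNorm (U y)) y ^ k) := by
        funext y; ring
      have hintb : IntegrableOn (fun y => opNorm (U y)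
          * (C₀ * (primF (fun y => opNorm (U y)) y ^ k / (k.factorial:ℝ)))) (Iic x) volume := by
        rw [h3]
        exact (integrableOn_mul_primF_pow hUint (fun y => opNorm_nonneg _) k
          (Iic x)).const_mul _
      have h4 : ‖∫ y in Iic x, appD lam (x - y) (Uc U y (m y))‖
          ≤ ∫ y in Iic x, opNorm (U y)
            * (C₀ * (primF (fun y => opNorm (U y)) y ^ k / (k.factorial:ℝ))) := by
        refine norm_integral_le_of_norm_le hintb ?_
        rw [ae_restrict_iff' measurableSet_Iic]
        refine Filter.Eventually.of_forall fun y hy => ?_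
        exact (norm_integrand_le hlam hy _).trans
          (mul_le_mul_of_nonneg_left (ih y) (opNorm_nonneg _))
      have h5 : (∫ y in Iic x, opNorm (U y)
          * (C₀ * (primF (fun y => opNorm (U y)) y ^ k / (k.factorial:ℝ))))
          = (C₀ / (k.factorial:ℝ))
            * ∫ y in Iic x, opNorm (U y) * primF (fun y => opNorm (U y)) y ^ k := by
        rw [h3]
        exact integral_const_mul _ _
      have hkf : (0:ℝ) < (k.factorial:ℝ) := by exact_mod_cast k.factorial_pos
      calc ‖∫ y in Iic x, appD lam (x - y) (Uc U y (m y))‖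
          ≤ ∫ y in Iic x, opNorm (U y)
            * (C₀ * (primF (fun y => opNorm (U y)) y ^ k / (k.factorial:ℝ))) := h4
        _ = (C₀ / (k.factorial:ℝ))
            * ∫ y in Iic x, opNorm (U y) * primF (fun y => opNorm (U y)) y ^ k := h5
        _ ≤ (C₀ / (k.factorial:ℝ))
            * (primF (fun y => opNorm (U y)) x ^ (k+1) / ((k:ℝ)+1)) := by
            apply mul_le_mul_of_nonneg_left
              (core_gronwall hUint (fun y => opNorm_nonneg _) k x) (by positivity)
        _ = C₀ * (primF (fun y => opNorm (U y)) x ^ (k+1) / ((k+1).factorial : ℝ)) := by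
            rw [Nat.factorial_succ]
            push_cast
            rw [div_mul_eq_mul_div, mul_div_assoc, div_div]
  intro x
  have hz : ‖m x‖ = 0 := by
    have h6 : ∀ k : ℕ, ‖m x‖ ≤ C₀ * ((∫ y, opNorm (U y)) ^ k / (k.factorial:ℝ)) := by
      intro k
      refine (hiter k x).trans ?_
      gcongr
      · exact primF_nonneg (fun y => opNorm_nonneg _) x
      · exact primF_le_integral hUint (fun y => opNorm_nonneg _) x
    have h7 : Tendsto (fun k : ℕ => C₀ * ((∫ y, opNorm (U y)) ^ k / (k.factorial:ℝ)))
        atTop (𝓝 (C₀ * 0)) :=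
      (FloorSemiring.tendsto_pow_div_factorial_atTop (∫ y, opNorm (U y))).const_mul C₀
    rw [mul_zero] at h7
    have h8 := ge_of_tendsto h7 (Filter.Eventually.of_forall h6)
    exact le_antisymm h8 (norm_nonneg _)
  have h9 : m x = 0 := norm_eq_zero.1 hz
  have h10 : w x - nsol U x lam = 0 := h9
  exact sub_eq_zero.1 h10

end limit
end JostAux

/-- For a measurable potential `U` with `∫ ‖U‖ < ∞` and each `λ` with
`Im λ ≥ 0` there is a unique bounded continuous solution `n(·,λ)` of
`n(x,λ) = e₁ + ∫_{-∞}^x D_λ(x-y)(U(y)n(y,λ))dy`; it satisfies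
`sup_x |n(x,λ)| ≤ exp(∫‖U‖)`, and for fixed `x` the map `λ ↦ n(x,λ)` is continuous on the
closed upper half-plane and holomorphic on the open upper half-plane. -/
theorem jost_column_upper_half_plane
    (U : ℝ → Mat3) (hUmeas : ∀ i j, Measurable fun y => U y i j)
    (hUint : Integrable (fun y => opNorm (U y)) volume) :
    ∃ n : ℝ → ℂ → Fin 3 → ℂ,
      (∀ lam : ℂ, 0 ≤ lam.im →
        IsJostCol U lam (fun x => n x lam) ∧
        (∀ n' : ℝ → Fin 3 → ℂ, IsJostCol U lam n' → n' = fun x => n x lam) ∧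
        ∀ x : ℝ, vecNorm (n x lam) ≤ Real.exp (∫ y : ℝ, opNorm (U y))) ∧
      (∀ x : ℝ,
        ContinuousOn (fun lam => n x lam) {lam : ℂ | 0 ≤ lam.im} ∧
        DifferentiableOn ℂ (fun lam => n x lam) {lam : ℂ | 0 < lam.im}) := by
  refine ⟨fun x lam i => JostAux.nsol U x lam i, fun lam hlam => ⟨⟨?_, ?_, ?_⟩, ?_, ?_⟩,
    fun x => ⟨?_, ?_⟩⟩
  · intro i
    exact ((continuous_apply i).comp (PiLp.continuous_ofLp 2 (fun _ : Fin 3 => ℂ))).comp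
      (JostAux.nsol_contx hUmeas hUint hlam)
  · refine ⟨Real.exp (∫ y : ℝ, opNorm (U y)), fun x => ?_⟩
    rw [JostAux.vecNorm_eq_norm]
    exact JostAux.nsol_norm_le hUmeas hUint hlam x
  · intro x i
    exact JostAux.nsol_eq_component hUmeas hUint hlam x i
  · intro n' hn'
    funext x
    have h := JostAux.unique_eq hUmeas hUint hlam n' hn' x
    funext i
    exact congrArg (fun v : JostAux.V => v i) h
  · intro x
    rw [JostAux.vecNorm_eq_norm]
    exact JostAux.nsol_norm_le hUmeas hUint hlam x
  · exact (PiLp.continuous_ofLp 2 (fun _ : Fin 3 => ℂ)).comp_continuousOn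
      (JostAux.nsol_contlam hUmeas hUint x)
  · exact ((PiLp.continuousLinearEquiv 2 ℂ (fun _ : Fin 3 => ℂ)).differentiable).comp_differentiableOn
      (JostAux.nsol_diff hUmeas hUint x)
end
end

section
/- Let ε ∈ {1,−1}, λ ∈ ℝ, and let u, v : ℝ → ℂ be continuous, with U the associated potential matrix. Let ψ : ℝ → M₃(ℂ) be differentiable with ψ(x) invertible for every x and ψ'(x) = (iλσ + U(x))ψ(x). Then the function φ(x) := J_ε (ψ(x)†)⁻¹ J_ε, where † denotes conjugate transpose and J_ε = diag(1, ε, ε), also satisfies φ'(x) = (iλσ + U(x))φ(x). -/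
noncomputable section
open MeasureTheory Complex Matrix Filter
open scoped Real Topology

/-- `σ = diag(-1,1,1)`. -/
def sigma3 : Mat3 := Matrix.diagonal ![-1, 1, 1]

/-- The potential matrix `U(x)` built from `u`, `v` and `ε`. -/
def potential (ε : ℂ) (u v : ℝ → ℂ) (x : ℝ) : Mat3 :=
  !![0, u x, v x;
     -ε * (starRingEnd ℂ) (u x), 0, 0;
     -ε * (starRingEnd ℂ) (v x), 0, 0]

/-- `J_ε = diag(1, ε, ε)`. -/
def Jmat (ε : ℂ) : Mat3 := Matrix.diagonal ![1, ε, ε]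

section Aux

attribute [local instance] Matrix.linftyOpNormedAddCommGroup Matrix.linftyOpNormedRing
  Matrix.linftyOpNormedAlgebra

instance : CompleteSpace Mat3 := FiniteDimensional.complete ℝ Mat3

/-- The identity, as a continuous `ℝ`-linear equivalence between `Mat3` (with the
`L∞`-operator norm) and the plain pi type. -/
def matCLE : Mat3 ≃L[ℝ] (Fin 3 → Fin 3 → ℂ) :=
  LinearEquiv.toContinuousLinearEquiv
  { toFun := fun M i j => M i j
    invFun := Matrix.of
    map_add' := fun _ _ => rfl
    map_smul' := fun _ _ => rfl
    left_inv := fun _ => rfl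
    right_inv := fun _ => rfl }

lemma hasDerivAt_matrix {f : ℝ → Mat3} {f' : Mat3} {x : ℝ} :
    HasDerivAt f f' x ↔ ∀ i j, HasDerivAt (fun t => f t i j) (f' i j) x := by
  constructor
  · intro h i j
    have h1 : HasDerivAt (fun t => matCLE (f t)) (matCLE f') x :=
      matCLE.toContinuousLinearMap.hasFDerivAt.comp_hasDerivAt x h
    exact hasDerivAt_pi.1 (hasDerivAt_pi.1 h1 i) j
  · intro h
    have h1 : HasDerivAt (fun t => matCLE (f t)) (matCLE f') x :=
      hasDerivAt_pi.2 fun i => hasDerivAt_pi.2 fun j => h i j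
    have h2 : HasDerivAt (fun t => matCLE.symm (matCLE (f t))) (matCLE.symm (matCLE f')) x :=
      matCLE.symm.toContinuousLinearMap.hasFDerivAt.comp_hasDerivAt x h1
    simpa using h2

lemma Jmat_mul_Jmat {ε : ℂ} (hε : ε = 1 ∨ ε = -1) : Jmat ε * Jmat ε = 1 := by
  have h1 : ε * ε = 1 := by rcases hε with rfl | rfl <;> ring
  ext i j
  fin_cases i <;> fin_cases j <;>
    simp [Jmat, Matrix.mul_apply, Fin.sum_univ_three, Matrix.one_apply, h1]

lemma key_conj (ε : ℂ) (hε : ε = 1 ∨ ε = -1) (lam : ℝ) (u v : ℝ → ℂ) (x : ℝ) :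
    Jmat ε * ((Complex.I * (lam : ℂ)) • sigma3 + potential ε u v x)ᴴ * Jmat ε
      = -((Complex.I * (lam : ℂ)) • sigma3 + potential ε u v x) := by
  have h1 : ε * ε = 1 := by rcases hε with rfl | rfl <;> ring
  have h2 : (starRingEnd ℂ) ε = ε := by rcases hε with rfl | rfl <;> simp
  have h3 : ε ^ 2 = 1 := by rcases hε with rfl | rfl <;> ring
  ext i j
  fin_cases i <;> fin_cases j <;>
    simp [Jmat, sigma3, potential, Matrix.mul_apply, Fin.sum_univ_three,
      Matrix.conjTranspose_apply, _root_.map_mul, h2, Complex.conj_ofReal,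
      Matrix.vecHead, Matrix.vecTail] <;>
    (try ring_nf) <;> (try simp [h3, Matrix.vecHead, Matrix.vecTail])

/-- If `ψ` is a pointwise invertible solution of `ψ' = (iλσ + U)ψ`, then
`φ(x) = J_ε (ψ(x)†)⁻¹ J_ε` also solves `φ' = (iλσ + U)φ`. -/
theorem symmetry_reduction_solution
    (ε : ℂ) (hε : ε = 1 ∨ ε = -1) (lam : ℝ) (u v : ℝ → ℂ)
    (hu : Continuous u) (hv : Continuous v)
    (ψ : ℝ → Mat3) (hinv : ∀ x, IsUnit (ψ x))
    (hψ : ∀ (x : ℝ) (i j : Fin 3),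
      HasDerivAt (fun t => ψ t i j)
        ((((Complex.I * (lam : ℂ)) • sigma3 + potential ε u v x) * ψ x) i j) x) :
    ∀ (x : ℝ) (i j : Fin 3),
      HasDerivAt (fun t => (Jmat ε * ((ψ t)ᴴ)⁻¹ * Jmat ε) i j)
        ((((Complex.I * (lam : ℂ)) • sigma3 + potential ε u v x) *
          (Jmat ε * ((ψ x)ᴴ)⁻¹ * Jmat ε)) i j) x := by
  intro x i j
  set A : Mat3 := (Complex.I * (lam : ℂ)) • sigma3 + potential ε u v x with hAdef
  have hdet : IsUnit ((ψ x)ᴴ) := by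
    rw [Matrix.isUnit_iff_isUnit_det, Matrix.det_conjTranspose]
    exact ((Matrix.isUnit_iff_isUnit_det _).1 (hinv x)).star
  -- derivative of ψᴴ
  have hg : HasDerivAt (fun t => (ψ t)ᴴ) ((A * ψ x)ᴴ) x := by
    apply hasDerivAt_matrix.2
    intro i j
    simpa [Matrix.conjTranspose_apply] using (hψ x j i).star
  -- derivative of (ψᴴ)⁻¹
  obtain ⟨w, hw⟩ := hdet
  have h1 : HasFDerivAt Ring.inverse
      (-(ContinuousLinearMap.mulLeftRight ℝ Mat3 ↑w⁻¹ ↑w⁻¹)) ((ψ x)ᴴ) :=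
    hw ▸ hasFDerivAt_ringInverse (𝕜 := ℝ) w
  have h2 := h1.comp_hasDerivAt x hg
  have hwinv : (↑w⁻¹ : Mat3) = ((ψ x)ᴴ)⁻¹ := by
    rw [Matrix.coe_units_inv, hw]
  have hinv' : HasDerivAt (fun t => (((ψ t)ᴴ)⁻¹ : Mat3))
      (-(((ψ x)ᴴ)⁻¹ * (A * ψ x)ᴴ * ((ψ x)ᴴ)⁻¹)) x := by
    have heq : (Ring.inverse ∘ fun t => (ψ t)ᴴ) = fun t => ((ψ t)ᴴ)⁻¹ := by
      funext t
      simp [Function.comp, Matrix.nonsing_inv_eq_ringInverse]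
    rw [heq] at h2
    simp only [hwinv, ContinuousLinearMap.mulLeftRight_apply] at h2
    have e : (-((ψ x)ᴴ⁻¹ * (A * ψ x)ᴴ * (ψ x)ᴴ⁻¹)) = (-(ContinuousLinearMap.mulLeftRight ℝ Mat3 ((ψ x)ᴴ⁻¹) ((ψ x)ᴴ⁻¹))) (A * ψ x)ᴴ := by
      simp [ContinuousLinearMap.mulLeftRight_apply, mul_assoc]
    rw [e]
    exact h2
  have hφ := (hinv'.const_mul (Jmat ε)).mul_const (Jmat ε)
  -- identify the derivative
  have hdet' : IsUnit ((ψ x)ᴴ).det := by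
    rw [Matrix.det_conjTranspose]
    exact ((Matrix.isUnit_iff_isUnit_det _).1 (hinv x)).star
  have hcan : ((ψ x)ᴴ)⁻¹ * (ψ x)ᴴ = 1 := Matrix.nonsing_inv_mul _ hdet'
  have hJJ : Jmat ε * Jmat ε = 1 := Jmat_mul_Jmat hε
  have hJJ' : ∀ X : Mat3, Jmat ε * (Jmat ε * X) = X := fun X => by
    rw [← mul_assoc, hJJ, one_mul]
  have hK : Jmat ε * Aᴴ * Jmat ε = -A := key_conj ε hε lam u v x
  have hM : Jmat ε * -(((ψ x)ᴴ)⁻¹ * (A * ψ x)ᴴ * ((ψ x)ᴴ)⁻¹) * Jmat ε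
      = A * (Jmat ε * ((ψ x)ᴴ)⁻¹ * Jmat ε) := by
    have e1 : ((ψ x)ᴴ)⁻¹ * (A * ψ x)ᴴ * ((ψ x)ᴴ)⁻¹ = Aᴴ * ((ψ x)ᴴ)⁻¹ := by
      rw [Matrix.conjTranspose_mul, ← mul_assoc, hcan, one_mul]
    rw [e1]
    have hA' : A = -(Jmat ε * Aᴴ * Jmat ε) := by rw [hK, neg_neg]
    conv_rhs => rw [hA']
    simp only [Matrix.neg_mul, Matrix.mul_neg, neg_mul, mul_neg, mul_assoc, hJJ']
  rw [hM] at hφ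
  exact hasDerivAt_matrix.1 hφ i j

end Aux
end
end
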